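/- Let n ≥ 0 and let a, b, c, d be nonnegative integers with a ≥ 1. Then the number of quadruples (T_1, T_t, T_{t+1}, T_{p+1}) of sets with T_t ⊆ T_1 ⊆ [1,n+1], T_{p+1} ⊆ T_{t+1} ⊆ [1,n], |T_1| = a, |T_t| = b, |T_{t+1}| = c, |T_{p+1}| = d, and such that T_{t+1} ⊆ T_t and {k+1 : k ∈ T_{p+1}} ⊆ T_1, equals C(a−1, d)·C(n+1−b, a−b)·C(n+1−c, b−c)·C(n−d, c−d). -/

import Mathlib

/-- Binomial coefficient `C(a,b)` for integers, with the convention that it is `0`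
when `a < 0` or `b < 0` (and, as usual, when `b > a`), and `C(a,0) = 1` for `a ≥ 0`. -/
def intChoose (a b : ℤ) : ℕ :=
  if 0 ≤ a ∧ 0 ≤ b then a.toNat.choose b.toNat else 0

open Finset

lemma aux_card_between {α : Type*} [DecidableEq α] (S U : Finset α) (hSU : S ⊆ U) {k : ℕ}
    (hk : S.card ≤ k) :
    (U.powerset.filter (fun T => S ⊆ T ∧ T.card = k)).card
      = (U.card - S.card).choose (k - S.card) := by
  rw [← Finset.card_sdiff_of_subset hSU, ← Finset.card_powersetCard (k - S.card) (U \ S)]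
  apply Finset.card_nbij' (fun T => T \ S) (fun V => V ∪ S)
  all_goals try simp only [Set.MapsTo, Set.LeftInvOn, Finset.mem_coe]
  · intro T hT
    simp only [mem_filter, mem_powerset] at hT
    obtain ⟨hTU, hST, hTk⟩ := hT
    rw [Finset.mem_powersetCard]
    exact ⟨Finset.sdiff_subset_sdiff hTU (le_refl S), by rw [Finset.card_sdiff_of_subset hST, hTk]⟩
  · intro V hV
    rw [Finset.mem_powersetCard] at hV
    obtain ⟨hVU, hVc⟩ := hV
    have hdisj : Disjoint V S := Finset.disjoint_of_subset_left hVU (Finset.sdiff_disjoint)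
    simp only [mem_filter, mem_powerset]
    refine ⟨Finset.union_subset (hVU.trans (Finset.sdiff_subset)) hSU,
      Finset.subset_union_right, ?_⟩
    rw [Finset.card_union_of_disjoint hdisj, hVc]
    omega
  · intro T hT
    simp only [mem_filter, mem_powerset] at hT
    exact Finset.sdiff_union_of_subset hT.2.1
  · intro V hV
    rw [Finset.mem_powersetCard] at hV
    have hdisj : Disjoint V S := Finset.disjoint_of_subset_left hV.1 (Finset.sdiff_disjoint)
    rw [Finset.union_sdiff_cancel_right hdisj]

/-- Pairs `(T1, Tp1)` with `Tp1 ⊆ T1 ⊆ [1,m]`, `|T1| = a`, `|Tp1| = d`, and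
`k ∈ Tp1 → k+1 ∈ T1`. -/
def auxPP (m a d : ℕ) : Finset (Finset ℕ × Finset ℕ) :=
  ((Finset.Icc 1 m).powerset ×ˢ (Finset.Icc 1 m).powerset).filter
    (fun p => p.1.card = a ∧ p.2.card = d ∧ p.2 ⊆ p.1 ∧ ∀ k ∈ p.2, k + 1 ∈ p.1)

lemma aux_mem_PP {m a d : ℕ} {p : Finset ℕ × Finset ℕ} :
    p ∈ auxPP m a d ↔ p.1 ⊆ Finset.Icc 1 m ∧ p.2 ⊆ Finset.Icc 1 m ∧
      p.1.card = a ∧ p.2.card = d ∧ p.2 ⊆ p.1 ∧ ∀ k ∈ p.2, k + 1 ∈ p.1 := by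
  simp only [auxPP, mem_filter, mem_product, mem_powerset]
  tauto

/-- The number of such pairs. -/
def auxNN (m a d : ℕ) : ℕ := (auxPP m a d).card

/-- The number of such pairs with `m ∈ T1`. -/
def auxAA (m a d : ℕ) : ℕ := ((auxPP m a d).filter (fun p => m ∈ p.1)).card

lemma aux_filter_not_top (m a d : ℕ) :
    (auxPP (m+1) a d).filter (fun p => m+1 ∉ p.1) = auxPP m a d := by
  ext p
  simp only [mem_filter, aux_mem_PP]
  constructor
  · rintro ⟨⟨h1, h2, hc1, hc2, hsub, hsh⟩, htop⟩
    refine ⟨fun x hx => ?_, fun k hk => ?_, hc1, hc2, hsub, hsh⟩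
    · have := h1 hx
      simp only [Finset.mem_Icc] at this ⊢
      have : x ≠ m + 1 := fun h => htop (h ▸ hx)
      omega
    · have h1k := h1 (hsub hk)
      have h1k' := h1 (hsh k hk)
      simp only [Finset.mem_Icc] at h1k h1k' ⊢
      omega
  · rintro ⟨h1, h2, hc1, hc2, hsub, hsh⟩
    have hsub1 : Finset.Icc 1 m ⊆ Finset.Icc 1 (m+1) := Finset.Icc_subset_Icc_right (by omega)
    refine ⟨⟨h1.trans hsub1, h2.trans hsub1, hc1, hc2, hsub, hsh⟩, fun hmem => ?_⟩
    have := h1 hmem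
    simp only [Finset.mem_Icc] at this
    omega

lemma aux_NN_split (m a d : ℕ) : auxNN (m+1) a d = auxAA (m+1) a d + auxNN m a d := by
  rw [auxNN, auxAA]
  conv_lhs => rw [← Finset.card_filter_add_card_filter_not
    (p := fun p : Finset ℕ × Finset ℕ => m+1 ∈ p.1) (s := auxPP (m+1) a d)]
  rw [aux_filter_not_top m a d, auxNN]

lemma aux_AA_no (m a d : ℕ) (ha : 1 ≤ a) :
    ((auxPP (m+1) a d).filter (fun p => m+1 ∈ p.1 ∧ m ∉ p.2)).card = auxNN m (a-1) d := by
  rw [auxNN]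
  apply Finset.card_nbij' (fun p => (p.1.erase (m+1), p.2))
    (fun p => (insert (m+1) p.1, p.2))
  all_goals try simp only [Set.MapsTo, Set.LeftInvOn, Finset.mem_coe]
  · intro p hp
    simp only [mem_filter, aux_mem_PP] at hp
    obtain ⟨⟨h1, h2, hc1, hc2, hsub, hsh⟩, htop, hm⟩ := hp
    have hk_le : ∀ k ∈ p.2, k + 1 ≤ m + 1 := fun k hk => by
      have := h1 (hsh k hk); simp only [Finset.mem_Icc] at this; omega
    rw [aux_mem_PP]
    refine ⟨?_, ?_, ?_, hc2, ?_, ?_⟩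
    · intro x hx
      rw [Finset.mem_erase] at hx
      have := h1 hx.2
      simp only [Finset.mem_Icc] at this ⊢
      have := hx.1
      omega
    · intro k hk
      have h1k := h2 hk
      have := hk_le k hk
      simp only [Finset.mem_Icc] at h1k ⊢
      omega
    · rw [Finset.card_erase_of_mem htop, hc1]
    · intro k hk
      rw [Finset.mem_erase]
      exact ⟨by have := hk_le k hk; omega, hsub hk⟩
    · intro k hk
      rw [Finset.mem_erase]
      refine ⟨fun h => hm ?_, hsh k hk⟩
      · have : k = m := by omega
        exact this ▸ hk
  · intro p hp
    rw [aux_mem_PP] at hp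
    obtain ⟨h1, h2, hc1, hc2, hsub, hsh⟩ := hp
    have hnot : (m+1) ∉ p.1 := fun h => by
      have := h1 h; simp only [Finset.mem_Icc] at this; omega
    have hsub1 : Finset.Icc 1 m ⊆ Finset.Icc 1 (m+1) := Finset.Icc_subset_Icc_right (by omega)
    simp only [mem_filter, aux_mem_PP]
    refine ⟨⟨?_, h2.trans hsub1, ?_, hc2, hsub.trans (Finset.subset_insert _ _), ?_⟩,
      Finset.mem_insert_self _ _, fun hm => ?_⟩
    · exact Finset.insert_subset (by simp) (h1.trans hsub1)
    · rw [Finset.card_insert_of_notMem hnot, hc1]; omega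
    · intro k hk
      exact Finset.mem_insert_of_mem (hsh k hk)
    · have := hsh m hm
      have := h1 this
      simp only [Finset.mem_Icc] at this
      omega
  · intro p hp
    simp only [mem_filter, aux_mem_PP] at hp
    have := Finset.insert_erase hp.2.1
    simp only [Prod.ext_iff]
    exact ⟨this, trivial⟩
  · intro p hp
    rw [aux_mem_PP] at hp
    have hnot : (m+1) ∉ p.1 := fun h => by
      have := hp.1 h; simp only [Finset.mem_Icc] at this; omega
    simp only [Prod.ext_iff]
    exact ⟨Finset.erase_insert hnot, trivial⟩

lemma aux_AA_yes (m a d : ℕ) (ha : 1 ≤ a) (hd : 1 ≤ d) :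
    ((auxPP (m+1) a d).filter (fun p => m+1 ∈ p.1 ∧ m ∈ p.2)).card = auxAA m (a-1) (d-1) := by
  rw [auxAA]
  apply Finset.card_nbij' (fun p => (p.1.erase (m+1), p.2.erase m))
    (fun p => (insert (m+1) p.1, insert m p.2))
  all_goals try simp only [Set.MapsTo, Set.LeftInvOn, Finset.mem_coe]
  · intro p hp
    simp only [mem_filter, aux_mem_PP] at hp
    obtain ⟨⟨h1, h2, hc1, hc2, hsub, hsh⟩, htop, hm⟩ := hp
    have hk_le : ∀ k ∈ p.2, k + 1 ≤ m + 1 := fun k hk => by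
      have := h1 (hsh k hk); simp only [Finset.mem_Icc] at this; omega
    simp only [mem_filter, aux_mem_PP]
    refine ⟨⟨?_, ?_, ?_, ?_, ?_, ?_⟩, ?_⟩
    · intro x hx
      rw [Finset.mem_erase] at hx
      have := h1 hx.2
      simp only [Finset.mem_Icc] at this ⊢
      have := hx.1
      omega
    · intro k hk
      rw [Finset.mem_erase] at hk
      have h1k := h2 hk.2
      have := hk_le k hk.2
      simp only [Finset.mem_Icc] at h1k ⊢
      omega
    · rw [Finset.card_erase_of_mem htop, hc1]
    · rw [Finset.card_erase_of_mem hm, hc2]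
    · intro k hk
      rw [Finset.mem_erase] at hk ⊢
      exact ⟨by have := hk_le k hk.2; omega, hsub hk.2⟩
    · intro k hk
      rw [Finset.mem_erase] at hk ⊢
      exact ⟨by omega, hsh k hk.2⟩
    · rw [Finset.mem_erase]
      exact ⟨by omega, hsub hm⟩
  · intro p hp
    simp only [mem_filter, aux_mem_PP] at hp
    obtain ⟨⟨h1, h2, hc1, hc2, hsub, hsh⟩, hm1⟩ := hp
    have hm_ge : 1 ≤ m := by
      have := h1 hm1; simp only [Finset.mem_Icc] at this; omega
    have hnot1 : (m+1) ∉ p.1 := fun h => by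
      have := h1 h; simp only [Finset.mem_Icc] at this; omega
    have hnot2 : m ∉ p.2 := fun h => by
      have := h1 (hsh m h); simp only [Finset.mem_Icc] at this; omega
    have hsub1 : Finset.Icc 1 m ⊆ Finset.Icc 1 (m+1) := Finset.Icc_subset_Icc_right (by omega)
    simp only [mem_filter, aux_mem_PP]
    refine ⟨⟨?_, ?_, ?_, ?_, ?_, ?_⟩, Finset.mem_insert_self _ _, Finset.mem_insert_self _ _⟩
    · exact Finset.insert_subset (by simp) (h1.trans hsub1)
    · refine Finset.insert_subset ?_ (h2.trans hsub1)
      simp only [Finset.mem_Icc]; omega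
    · rw [Finset.card_insert_of_notMem hnot1, hc1]; omega
    · rw [Finset.card_insert_of_notMem hnot2, hc2]; omega
    · intro k hk
      rw [Finset.mem_insert] at hk
      rcases hk with rfl | hk
      · exact Finset.mem_insert_of_mem hm1
      · exact Finset.mem_insert_of_mem (hsub hk)
    · intro k hk
      rw [Finset.mem_insert] at hk
      rcases hk with rfl | hk
      · exact Finset.mem_insert_self _ _
      · exact Finset.mem_insert_of_mem (hsh k hk)
  · intro p hp
    simp only [mem_filter, aux_mem_PP] at hp
    simp only [Prod.ext_iff]
    exact ⟨Finset.insert_erase hp.2.1, Finset.insert_erase hp.2.2⟩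
  · intro p hp
    simp only [mem_filter, aux_mem_PP] at hp
    obtain ⟨⟨h1, h2, hc1, hc2, hsub, hsh⟩, hm1⟩ := hp
    have hnot1 : (m+1) ∉ p.1 := fun h => by
      have := h1 h; simp only [Finset.mem_Icc] at this; omega
    have hnot2 : m ∉ p.2 := fun h => by
      have := h1 (hsh m h); simp only [Finset.mem_Icc] at this; omega
    simp only [Prod.ext_iff]
    exact ⟨Finset.erase_insert hnot1, Finset.erase_insert hnot2⟩

lemma aux_AA_a_zero (m d : ℕ) : auxAA m 0 d = 0 := by
  rw [auxAA, Finset.card_eq_zero, Finset.filter_eq_empty_iff]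
  intro p hp
  rw [aux_mem_PP] at hp
  intro hm
  rw [Finset.card_eq_zero.mp hp.2.2.1] at hm
  exact absurd hm (Finset.notMem_empty m)

lemma aux_AA_split (m a d : ℕ) :
    auxAA (m+1) a d = ((auxPP (m+1) a d).filter (fun p => m+1 ∈ p.1 ∧ m ∈ p.2)).card
      + ((auxPP (m+1) a d).filter (fun p => m+1 ∈ p.1 ∧ m ∉ p.2)).card := by
  rw [auxAA]
  rw [← Finset.card_filter_add_card_filter_not
    (p := fun p : Finset ℕ × Finset ℕ => m ∈ p.2)
    (s := (auxPP (m+1) a d).filter (fun p => m+1 ∈ p.1))]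
  rw [Finset.filter_filter, Finset.filter_filter]

lemma aux_yes_empty_d_zero (m a : ℕ) :
    ((auxPP (m+1) a 0).filter (fun p => m+1 ∈ p.1 ∧ m ∈ p.2)).card = 0 := by
  rw [Finset.card_eq_zero, Finset.filter_eq_empty_iff]
  intro p hp
  rw [aux_mem_PP] at hp
  rintro ⟨-, hm⟩
  rw [Finset.card_eq_zero.mp hp.2.2.2.1] at hm
  exact absurd hm (Finset.notMem_empty m)

lemma aux_closed (m : ℕ) :
    (∀ a d, auxNN m a d = (a-1).choose d * (m-d).choose (a-d)) ∧
    (∀ a d, auxAA m a d = if 1 ≤ a ∧ a ≤ m then (a-1).choose d * (m-1-d).choose (a-1-d) else 0) := by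
  induction m with
  | zero =>
    constructor
    · intro a d
      have h0 : Finset.Icc 1 0 = (∅ : Finset ℕ) := by simp
      rw [auxNN, auxPP, h0]
      simp only [Finset.powerset_empty, Finset.singleton_product_singleton,
        Finset.filter_singleton]
      rcases Nat.eq_zero_or_pos a with rfl | ha
      · rcases Nat.eq_zero_or_pos d with rfl | hd
        · simp
        · simp only [Finset.card_empty, Finset.card_eq_zero]
          rw [if_neg (by simp; omega)]
          simp [Nat.choose_eq_zero_of_lt hd]
      · rw [if_neg (by simp; omega)]
        rcases Nat.lt_or_ge d a with hd | hd
        · have hz : Nat.choose 0 (a-d) = 0 := Nat.choose_eq_zero_of_lt (by omega)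
          simp [Nat.zero_sub, hz]
        · have : (a-1).choose d = 0 := Nat.choose_eq_zero_of_lt (by omega)
          simp [this]
    · intro a d
      rw [if_neg (by omega)]
      rw [auxAA, Finset.card_eq_zero, Finset.filter_eq_empty_iff]
      intro p hp
      rw [aux_mem_PP] at hp
      intro hm
      have := hp.1 hm
      simp only [Finset.mem_Icc] at this
      omega
  | succ m ih =>
    obtain ⟨hNN, hAA⟩ := ih
    have hAA' : ∀ a d, auxAA (m+1) a d =
        if 1 ≤ a ∧ a ≤ m+1 then (a-1).choose d * (m-d).choose (a-1-d) else 0 := by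
      intro a d
      by_cases ha : 1 ≤ a
      · rw [aux_AA_split]
        by_cases hd : 1 ≤ d
        · rw [aux_AA_yes m a d ha hd, aux_AA_no m a d ha, hAA, hNN]
          by_cases ha2 : 2 ≤ a
          · by_cases ham : a ≤ m + 1
            · rw [if_pos ⟨by omega, by omega⟩, if_pos ⟨by omega, by omega⟩]
              have e1 : m - 1 - (d-1) = m - d := by omega
              have e2 : a - 1 - 1 - (d-1) = a - 1 - d := by omega
              have e3 : a - 1 - 1 = a - 2 := by omega
              have e4 : m - d ≤ m - d := le_refl _
              rw [e1, e2, e3, ← Nat.add_mul]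
              congr 1
              have e5 : a - 1 = (a-2)+1 := by omega
              have e6 : d = (d-1)+1 := by omega
              rw [e5]
              conv_rhs => rw [e6]
              rw [Nat.choose_succ_succ']
              congr 2 <;> omega
            · rw [if_neg (by omega), if_neg (by omega), zero_add]
              have e3 : a - 1 - 1 = a - 2 := by omega
              rw [e3]
              rcases le_or_gt d m with hdm | hdm
              · have hz : (m-d).choose (a-1-d) = 0 := Nat.choose_eq_zero_of_lt (by omega)
                simp [hz]
              · rcases le_or_gt (a-1) d with h1 | h1
                · have hz : (a-2).choose d = 0 := Nat.choose_eq_zero_of_lt (by omega)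
                  simp [hz]
                · have hm0 : m - d = 0 := by omega
                  have hz : (m-d).choose (a-1-d) = 0 := by
                    rw [hm0]; exact Nat.choose_eq_zero_of_lt (by omega)
                  simp [hz]
          · have ha1 : a = 1 := by omega
            subst ha1
            rw [if_neg (by omega), zero_add, if_pos ⟨le_refl 1, by omega⟩]
        · have hd0 : d = 0 := by omega
          subst hd0
          rw [aux_yes_empty_d_zero, aux_AA_no m a 0 ha, hNN, zero_add]
          rw [Nat.choose_zero_right, Nat.choose_zero_right]
          by_cases ham : a ≤ m+1
          · rw [if_pos ⟨ha, ham⟩]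
          · rw [if_neg (by omega)]
            have hz : m.choose (a-1) = 0 := Nat.choose_eq_zero_of_lt (by omega)
            simp [hz]
      · have ha0 : a = 0 := by omega
        subst ha0
        rw [aux_AA_a_zero, if_neg (by omega)]
    constructor
    · intro a d
      rw [aux_NN_split, hAA' a d, hNN a d]
      by_cases ha : 1 ≤ a
      · by_cases hda : d ≤ a - 1
        · by_cases ham : a ≤ m+1
          · rw [if_pos ⟨ha, ham⟩, ← Nat.mul_add]
            congr 1
            have e1 : m+1-d = (m-d)+1 := by omega
            have e2 : a-d = (a-1-d)+1 := by omega
            rw [e1, e2, Nat.choose_succ_succ']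
          · rw [if_neg (by omega), zero_add]
            have h1 : (m-d).choose (a-d) = 0 := Nat.choose_eq_zero_of_lt (by omega)
            have h2 : (m+1-d).choose (a-d) = 0 := Nat.choose_eq_zero_of_lt (by omega)
            rw [h1, h2]
        · have hz : (a-1).choose d = 0 := Nat.choose_eq_zero_of_lt (by omega)
          rw [hz]
          split_ifs <;> simp
      · have ha0 : a = 0 := by omega
        subst ha0
        rw [if_neg (by omega), zero_add]
        simp [Nat.zero_sub]
    · intro a d
      rw [hAA' a d]
      have e : m + 1 - 1 - d = m - d := by omega
      rw [e]

lemma aux_fiber (n a b c d : ℕ) (hdc : d ≤ c) (hcb : c ≤ b) (p : Finset ℕ × Finset ℕ)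
    (hp : p ∈ auxPP (n+1) a d) :
    ((((Finset.Icc 1 (n + 1)).powerset ×ˢ (Finset.Icc 1 (n + 1)).powerset ×ˢ
        (Finset.Icc 1 n).powerset ×ˢ (Finset.Icc 1 n).powerset).filter
        (fun q => q.1.card = a ∧ q.2.1.card = b ∧ q.2.2.1.card = c ∧ q.2.2.2.card = d ∧
          q.2.1 ⊆ q.1 ∧ q.2.2.2 ⊆ q.2.2.1 ∧ q.2.2.1 ⊆ q.2.1 ∧
          ∀ k ∈ q.2.2.2, k + 1 ∈ q.1)).filter (fun q => (q.1, q.2.2.2) = p)).card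
      = ((p.1 ∩ Finset.Icc 1 n).card - d).choose (c - d) * ((a-c).choose (b-c)) := by
  rw [aux_mem_PP] at hp
  obtain ⟨hp1, hp2, hpc1, hpc2, hpsub, hpsh⟩ := hp
  have hp2n : p.2 ⊆ Finset.Icc 1 n := by
    intro k hk
    have h1 := hp2 hk
    have h2 := hp1 (hpsh k hk)
    simp only [Finset.mem_Icc] at h1 h2 ⊢
    omega
  have hp2int : p.2 ⊆ p.1 ∩ Finset.Icc 1 n :=
    Finset.subset_inter hpsub hp2n
  -- Step A : bijection with pairs (Tt1, Tt)
  have stepA : ((((Finset.Icc 1 (n + 1)).powerset ×ˢ (Finset.Icc 1 (n + 1)).powerset ×ˢ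
        (Finset.Icc 1 n).powerset ×ˢ (Finset.Icc 1 n).powerset).filter
        (fun q => q.1.card = a ∧ q.2.1.card = b ∧ q.2.2.1.card = c ∧ q.2.2.2.card = d ∧
          q.2.1 ⊆ q.1 ∧ q.2.2.2 ⊆ q.2.2.1 ∧ q.2.2.1 ⊆ q.2.1 ∧
          ∀ k ∈ q.2.2.2, k + 1 ∈ q.1)).filter (fun q => (q.1, q.2.2.2) = p)).card
      = ((((p.1 ∩ Finset.Icc 1 n).powerset ×ˢ p.1.powerset).filter
          (fun r => p.2 ⊆ r.1 ∧ r.1.card = c ∧ r.1 ⊆ r.2 ∧ r.2.card = b)) :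
          Finset (Finset ℕ × Finset ℕ)).card := by
    apply Finset.card_nbij' (fun q => (q.2.2.1, q.2.1)) (fun r => (p.1, r.2, r.1, p.2))
    all_goals try simp only [Set.MapsTo, Set.LeftInvOn, Finset.mem_coe]
    · intro q hq
      simp only [mem_filter, mem_product, mem_powerset, Prod.ext_iff] at hq
      obtain ⟨⟨⟨m1, m2, m3, m4⟩, hca, hcb', hcc, hcd, hba, hdc', hcb2, hsh⟩, he1, he2⟩ := hq
      simp only [mem_filter, mem_product, mem_powerset]
      refine ⟨⟨Finset.subset_inter (fun x hx => ?_) m3, ?_⟩, ?_, hcc, hcb2, hcb'⟩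
      · rw [← he1]; exact hba (hcb2 hx)
      · rw [← he1]; exact hba
      · rw [← he2]; exact hdc'
    · intro r hr
      simp only [mem_filter, mem_product, mem_powerset] at hr
      obtain ⟨⟨hr1, hr2⟩, hpr, hrc, hrr, hrb⟩ := hr
      have hr1n : r.1 ⊆ Finset.Icc 1 n := hr1.trans (Finset.inter_subset_right)
      have hr1p : r.2 ⊆ Finset.Icc 1 (n+1) := hr2.trans hp1
      simp only [mem_filter, mem_product, mem_powerset]
      exact ⟨⟨⟨hp1, hr1p, hr1n, hp2n⟩, hpc1, hrb, hrc, hpc2, hr2, hpr, hrr, hpsh⟩, trivial⟩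
    · intro q hq
      simp only [mem_filter, Prod.ext_iff] at hq
      obtain ⟨-, he1, he2⟩ := hq
      rw [← he1, ← he2]
    · intro r hr
      trivial
  rw [stepA]
  have hS1 : ∀ X ∈ (p.1 ∩ Finset.Icc 1 n).powerset.filter (fun X => p.2 ⊆ X ∧ X.card = c),
      ((((p.1 ∩ Finset.Icc 1 n).powerset ×ˢ p.1.powerset).filter
          (fun r => p.2 ⊆ r.1 ∧ r.1.card = c ∧ r.1 ⊆ r.2 ∧ r.2.card = b)).filter
          (fun r => r.1 = X)).card = (a - c).choose (b - c) := by
    intro X hX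
    simp only [mem_filter, mem_powerset] at hX
    obtain ⟨hXsub, hXp2, hXc⟩ := hX
    have hXp1 : X ⊆ p.1 := hXsub.trans Finset.inter_subset_left
    have hbc := aux_card_between X p.1 hXp1 (k := b) (by omega)
    rw [hpc1, hXc] at hbc
    rw [← hbc]
    apply Finset.card_nbij' (fun r => r.2) (fun Y => (X, Y))
    all_goals try simp only [Set.MapsTo, Set.LeftInvOn, Finset.mem_coe]
    · intro r hr
      simp only [mem_filter, mem_product, mem_powerset] at hr ⊢
      obtain ⟨⟨⟨-, h2⟩, -, -, hXr, hb⟩, he⟩ := hr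
      exact ⟨h2, he ▸ hXr, hb⟩
    · intro Y hY
      simp only [mem_filter, mem_product, mem_powerset] at hY ⊢
      obtain ⟨hYp, hXY, hYb⟩ := hY
      exact ⟨⟨⟨hXsub, hYp⟩, hXp2, hXc, hXY, hYb⟩, trivial⟩
    · intro r hr
      simp only [mem_filter] at hr
      rw [← hr.2]
    · intro Y hY
      trivial
  rw [Finset.card_eq_sum_card_fiberwise (f := fun r => r.1)
      (t := (p.1 ∩ Finset.Icc 1 n).powerset.filter (fun X => p.2 ⊆ X ∧ X.card = c))
      (fun r hr => by
        simp only [Finset.mem_coe, mem_filter, mem_product, mem_powerset] at hr ⊢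
        exact ⟨hr.1.1, hr.2.1, hr.2.2.1⟩)]
  rw [Finset.sum_congr rfl hS1, Finset.sum_const, smul_eq_mul]
  congr 1
  have hbd := aux_card_between p.2 (p.1 ∩ Finset.Icc 1 n) hp2int (k := c) (by omega)
  rw [hpc2] at hbd
  exact hbd

lemma aux_key (n a b c d : ℕ) (ha : 1 ≤ a) (hdc : d ≤ c) (hcb : c ≤ b) (hba : b ≤ a)
    (han : a ≤ n+1) (hcn : c ≤ n) :
    (a-1).choose d * (n-d).choose (a-1-d) * ((a-1-d).choose (c-d) * (a-c).choose (b-c))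
      + (a-1).choose d * (n-d).choose (a-d) * ((a-d).choose (c-d) * (a-c).choose (b-c))
    = (a-1).choose d * (n+1-b).choose (a-b) * (n+1-c).choose (b-c) * (n-d).choose (c-d) := by
  by_cases hda : d ≤ a - 1
  · have key : (n-d).choose (a-1-d) * (a-1-d).choose (c-d) * (a-c).choose (b-c)
        + (n-d).choose (a-d) * (a-d).choose (c-d) * (a-c).choose (b-c)
        = (n+1-b).choose (a-b) * (n+1-c).choose (b-c) * (n-d).choose (c-d) := by
    -- first reduce RHS
      have hR : (n+1-c).choose (a-c) * (a-c).choose (b-c)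
          = (n+1-c).choose (b-c) * (n+1-b).choose (a-b) := by
        have := Nat.choose_mul (n := n+1-c) (k := a-c) (s := b-c)
          (by omega)
        rw [this, show n+1-c-(b-c) = n+1-b by omega, show a-c-(b-c) = a-b by omega]
      have goal2 : (n-d).choose (a-1-d) * (a-1-d).choose (c-d) * (a-c).choose (b-c)
          + (n-d).choose (a-d) * (a-d).choose (c-d) * (a-c).choose (b-c)
          = (n+1-c).choose (a-c) * (a-c).choose (b-c) * (n-d).choose (c-d) := by
        rcases Nat.lt_or_ge a (n+1) with han' | han'
        · -- a ≤ n
          have han2 : a ≤ n := by omega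
          by_cases hca : c ≤ a - 1
          · have h1 : (n-d).choose (a-1-d) * (a-1-d).choose (c-d)
                = (n-d).choose (c-d) * (n-c).choose (a-1-c) := by
              have := Nat.choose_mul (n := n-d) (k := a-1-d) (s := c-d)
                (by omega)
              rw [this, show n-d-(c-d) = n-c by omega, show a-1-d-(c-d) = a-1-c by omega]
            have h2 : (n-d).choose (a-d) * (a-d).choose (c-d)
                = (n-d).choose (c-d) * (n-c).choose (a-c) := by
              have := Nat.choose_mul (n := n-d) (k := a-d) (s := c-d)
                (by omega)
              rw [this, show n-d-(c-d) = n-c by omega, show a-d-(c-d) = a-c by omega]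
            have h3 : (n+1-c).choose (a-c) = (n-c).choose (a-1-c) + (n-c).choose (a-c) := by
              have e : n+1-c = (n-c)+1 := by omega
              have e2 : a-c = (a-1-c)+1 := by omega
              rw [e, e2, Nat.choose_succ_succ']
            rw [h1, h2, h3]
            ring
          · -- c = a, so b = a
            have hc : c = a := by omega
            have hb : b = a := by omega
            rw [hc, hb]
            have hz : (a-1-d).choose (a-d) = 0 := by
              rw [show a-d = (a-1-d)+1 by omega]
              exact Nat.choose_succ_self _
            rw [hz]
            simp [Nat.sub_self]
        · -- a = n+1
          have haeq : a = n+1 := by omega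
          have h0 : (n-d).choose (a-d) = 0 := Nat.choose_eq_zero_of_lt (by omega)
          have h1 : a-1-d = n-d := by omega
          have e : a - c = n+1-c := by omega
          rw [h0, h1, Nat.choose_self, e, Nat.choose_self]
          ring
      rw [goal2, hR]
      ring
    calc (a-1).choose d * (n-d).choose (a-1-d) * ((a-1-d).choose (c-d) * (a-c).choose (b-c))
          + (a-1).choose d * (n-d).choose (a-d) * ((a-d).choose (c-d) * (a-c).choose (b-c))
        = (a-1).choose d * ((n-d).choose (a-1-d) * (a-1-d).choose (c-d) * (a-c).choose (b-c)
            + (n-d).choose (a-d) * (a-d).choose (c-d) * (a-c).choose (b-c)) := by ring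
      _ = (a-1).choose d * ((n+1-b).choose (a-b) * (n+1-c).choose (b-c) * (n-d).choose (c-d)) := by
          rw [key]
      _ = (a-1).choose d * (n+1-b).choose (a-b) * (n+1-c).choose (b-c) * (n-d).choose (c-d) := by
          ring
  · have hz : (a-1).choose d = 0 := Nat.choose_eq_zero_of_lt (by omega)
    rw [hz]
    ring

lemma aux_inter_card (n a d : ℕ) (p : Finset ℕ × Finset ℕ) (hp : p ∈ auxPP (n+1) a d) :
    (p.1 ∩ Finset.Icc 1 n).card = if n+1 ∈ p.1 then a - 1 else a := by
  rw [aux_mem_PP] at hp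
  obtain ⟨hp1, -, hpc1, -⟩ := hp
  have he : p.1 ∩ Finset.Icc 1 n = p.1.erase (n+1) := by
    ext x
    simp only [Finset.mem_inter, Finset.mem_erase, Finset.mem_Icc]
    constructor
    · rintro ⟨hx, h1, h2⟩
      exact ⟨by omega, hx⟩
    · rintro ⟨hne, hx⟩
      have := hp1 hx
      simp only [Finset.mem_Icc] at this
      exact ⟨hx, by omega⟩
  rw [he]
  by_cases h : n+1 ∈ p.1
  · rw [if_pos h, Finset.card_erase_of_mem h, hpc1]
  · rw [if_neg h, Finset.erase_eq_of_notMem h, hpc1]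

lemma aux_intChoose_neg {x y : ℤ} (h : y < 0) : intChoose x y = 0 := by
  rw [intChoose, if_neg (by omega)]

lemma aux_intChoose_lt {x y : ℤ} (h : x < y) : intChoose x y = 0 := by
  by_cases h0 : 0 ≤ x ∧ 0 ≤ y
  · rw [intChoose, if_pos h0]
    exact Nat.choose_eq_zero_of_lt (by omega)
  · rw [intChoose, if_neg h0]

lemma aux_intChoose_eq {x y : ℤ} (h0 : 0 ≤ x) (h1 : 0 ≤ y) :
    intChoose x y = x.toNat.choose y.toNat := if_pos ⟨h0, h1⟩

/-- The number of quadruples `(T1, Tt, Tt1, Tp1)` with `Tt ⊆ T1 ⊆ [1,n+1]`,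
`Tp1 ⊆ Tt1 ⊆ [1,n]`, of cardinalities `a, b, c, d` respectively, with `Tt1 ⊆ Tt`
and `{k+1 : k ∈ Tp1} ⊆ T1`, equals
`C(a−1, d) · C(n+1−b, a−b) · C(n+1−c, b−c) · C(n−d, c−d)`. -/
theorem card_quadruples_preprojective (n a b c d : ℕ) (ha : 1 ≤ a) :
    (((Finset.Icc 1 (n + 1)).powerset ×ˢ (Finset.Icc 1 (n + 1)).powerset ×ˢ
        (Finset.Icc 1 n).powerset ×ˢ (Finset.Icc 1 n).powerset).filter
        (fun q => q.1.card = a ∧ q.2.1.card = b ∧ q.2.2.1.card = c ∧ q.2.2.2.card = d ∧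
          q.2.1 ⊆ q.1 ∧ q.2.2.2 ⊆ q.2.2.1 ∧ q.2.2.1 ⊆ q.2.1 ∧
          ∀ k ∈ q.2.2.2, k + 1 ∈ q.1)).card
      = intChoose ((a : ℤ) - 1) (d : ℤ) *
        intChoose ((n : ℤ) + 1 - b) ((a : ℤ) - b) *
        intChoose ((n : ℤ) + 1 - c) ((b : ℤ) - c) *
        intChoose ((n : ℤ) - d) ((c : ℤ) - d) := by
  by_cases hba : b ≤ a
  swap
  · refine (Finset.card_eq_zero.mpr (Finset.filter_eq_empty_iff.mpr ?_)).trans ?_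
    · rintro q hq ⟨hca, hcb', -, -, hsub, -⟩
      have := Finset.card_le_card hsub
      omega
    · rw [aux_intChoose_neg (x := (n:ℤ)+1-b) (by omega)]
      ring
  by_cases hcb : c ≤ b
  swap
  · refine (Finset.card_eq_zero.mpr (Finset.filter_eq_empty_iff.mpr ?_)).trans ?_
    · rintro q hq ⟨-, hcb', hcc, -, -, -, hsub, -⟩
      have := Finset.card_le_card hsub
      omega
    · rw [aux_intChoose_neg (x := (n:ℤ)+1-c) (by omega)]
      ring
  by_cases hdc : d ≤ c
  swap
  · refine (Finset.card_eq_zero.mpr (Finset.filter_eq_empty_iff.mpr ?_)).trans ?_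
    · rintro q hq ⟨-, -, hcc, hcd, -, hsub, -⟩
      have := Finset.card_le_card hsub
      omega
    · rw [aux_intChoose_neg (x := (n:ℤ)-d) (by omega)]
      ring
  by_cases han : a ≤ n+1
  swap
  · refine (Finset.card_eq_zero.mpr (Finset.filter_eq_empty_iff.mpr ?_)).trans ?_
    · rintro q hq ⟨hca, -⟩
      simp only [Finset.mem_product, Finset.mem_powerset] at hq
      have := Finset.card_le_card hq.1
      rw [Nat.card_Icc] at this
      omega
    · rw [aux_intChoose_lt (x := (n:ℤ)+1-b) (y := (a:ℤ)-b) (by omega)]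
      ring
  by_cases hcn : c ≤ n
  swap
  · refine (Finset.card_eq_zero.mpr (Finset.filter_eq_empty_iff.mpr ?_)).trans ?_
    · rintro q hq ⟨-, -, hcc, -⟩
      simp only [Finset.mem_product, Finset.mem_powerset] at hq
      have := Finset.card_le_card hq.2.2.1
      rw [Nat.card_Icc] at this
      omega
    · rw [aux_intChoose_lt (x := (n:ℤ)-d) (y := (c:ℤ)-d) (by omega)]
      ring
  -- nondegenerate case
  rw [aux_intChoose_eq (by omega) (by omega), aux_intChoose_eq (by omega) (by omega),
    aux_intChoose_eq (by omega) (by omega), aux_intChoose_eq (by omega) (by omega)]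
  rw [show ((a:ℤ)-1).toNat = a-1 by omega, show ((d:ℤ)).toNat = d by omega,
    show ((n:ℤ)+1-b).toNat = n+1-b by omega, show ((a:ℤ)-b).toNat = a-b by omega,
    show ((n:ℤ)+1-c).toNat = n+1-c by omega, show ((b:ℤ)-c).toNat = b-c by omega,
    show ((n:ℤ)-d).toNat = n-d by omega, show ((c:ℤ)-d).toNat = c-d by omega]
  rw [Finset.card_eq_sum_card_fiberwise (f := fun q => (q.1, q.2.2.2))
      (t := auxPP (n+1) a d) (fun q hq => by
        simp only [Finset.mem_coe, Finset.mem_filter, Finset.mem_product, Finset.mem_powerset] at hq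
        obtain ⟨⟨m1, m2, m3, m4⟩, hca, hcb', hcc, hcd, hba', hdc', hcb2, hsh⟩ := hq
        rw [Finset.mem_coe, aux_mem_PP]
        exact ⟨m1, m4.trans (Finset.Icc_subset_Icc_right (by omega)), hca, hcd,
          (hdc'.trans hcb2).trans hba', hsh⟩)]
  rw [Finset.sum_congr rfl (fun p hp => aux_fiber n a b c d hdc hcb p hp)]
  rw [← Finset.sum_filter_add_sum_filter_not (auxPP (n+1) a d) (fun p => n+1 ∈ p.1)]
  have e1 : ∀ p ∈ Finset.filter (fun x => n + 1 ∈ x.1) (auxPP (n + 1) a d),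
      ((p.1 ∩ Finset.Icc 1 n).card - d).choose (c - d) * (a - c).choose (b - c)
        = (a-1-d).choose (c - d) * (a - c).choose (b - c) := by
    intro p hp
    rw [Finset.mem_filter] at hp
    rw [aux_inter_card n a d p hp.1, if_pos hp.2]
  have e0 : ∀ p ∈ Finset.filter (fun x => n + 1 ∉ x.1) (auxPP (n + 1) a d),
      ((p.1 ∩ Finset.Icc 1 n).card - d).choose (c - d) * (a - c).choose (b - c)
        = (a-d).choose (c - d) * (a - c).choose (b - c) := by
    intro p hp
    rw [Finset.mem_filter] at hp
    rw [aux_inter_card n a d p hp.1, if_neg hp.2]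
  rw [Finset.sum_congr rfl e1, Finset.sum_congr rfl e0,
    Finset.sum_const, Finset.sum_const, smul_eq_mul, smul_eq_mul]
  have hAAdef : (Finset.filter (fun p => n+1 ∈ p.1) (auxPP (n+1) a d)).card
      = auxAA (n+1) a d := rfl
  have hNNdef : (Finset.filter (fun p => ¬ n+1 ∈ p.1) (auxPP (n+1) a d)).card
      = auxNN n a d := by
    rw [auxNN, ← aux_filter_not_top n a d]
  rw [hAAdef, hNNdef, (aux_closed (n+1)).2 a d, (aux_closed n).1 a d,
    if_pos ⟨ha, han⟩, show n+1-1-d = n-d by omega]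
  exact aux_key n a b c d ha hdc hcb hba han hcn
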